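/- Let (Ω, F, P) be a probability space, let 𝒜 and ℬ be sub-σ-algebras of F, and let φ ≥ 0 satisfy |P(B) − P(B | A)| ≤ φ for every A ∈ 𝒜 with P(A) > 0 and every B ∈ ℬ. Then for every bounded 𝒜-measurable random variable X and every bounded ℬ-measurable random variable Y, | E[X Y] − E[X] E[Y] | ≤ 2 φ ‖X‖_∞ ‖Y‖_∞. -/

import Mathlib

open MeasureTheory

section Aux
open Set

private lemma integrable_of_bdd {Ω : Type*} [MeasurableSpace Ω] {P : Measure Ω}
    [IsFiniteMeasure P] {g : Ω → ℝ} (hg : Measurable g) (M : ℝ) (hb : ∀ ω, |g ω| ≤ M) :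
    Integrable g P :=
  (integrable_const M).mono' hg.aestronglyMeasurable
    (Filter.Eventually.of_forall fun ω => by simpa [Real.norm_eq_abs] using hb ω)

private lemma tv_aux {Ω : Type*} [MeasurableSpace Ω] (P Q : Measure Ω)
    [IsProbabilityMeasure P] [IsProbabilityMeasure Q]
    (g : Ω → ℝ) (hg : Measurable g) (M φ : ℝ) (hφ : 0 ≤ φ) (hM : 0 ≤ M)
    (hg0 : ∀ ω, 0 ≤ g ω) (hgM : ∀ ω, g ω ≤ M)
    (h : ∀ t : ℝ, 0 < t → |(P {ω | t < g ω}).toReal - (Q {ω | t < g ω}).toReal| ≤ φ) :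
    |(∫ ω, g ω ∂P) - ∫ ω, g ω ∂Q| ≤ φ * M := by
  have hb : ∀ ω, |g ω| ≤ M := fun ω => abs_le.2 ⟨by linarith [hg0 ω], hgM ω⟩
  have intP : Integrable g P := integrable_of_bdd hg M hb
  have intQ : Integrable g Q := integrable_of_bdd hg M hb
  have eqP : (∫ ω, g ω ∂P) = ∫ t in Ioi (0:ℝ), (P {a | t < g a}).toReal :=
    intP.integral_eq_integral_meas_lt (Filter.Eventually.of_forall hg0)
  have eqQ : (∫ ω, g ω ∂Q) = ∫ t in Ioi (0:ℝ), (Q {a | t < g a}).toReal :=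
    intQ.integral_eq_integral_meas_lt (Filter.Eventually.of_forall hg0)
  have anti : ∀ (R : Measure Ω) [IsFiniteMeasure R],
      Antitone (fun t => (R {a | t < g a}).toReal) := by
    intro R _ s t hst
    exact ENNReal.toReal_mono (measure_ne_top R _)
      (measure_mono fun a (ha : t < g a) => lt_of_le_of_lt hst ha)
  have zeroP : ∀ (R : Measure Ω), ∀ t : ℝ, M ≤ t → (R {a | t < g a}).toReal = 0 := by
    intro R t ht
    have : {a | t < g a} = (∅ : Set Ω) := by
      ext a; simp only [mem_setOf_eq, mem_empty_iff_false, iff_false, not_lt]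
      exact (hgM a).trans ht
    simp [this]
  have bddP : ∀ (R : Measure Ω) [IsProbabilityMeasure R],
      ∀ t : ℝ, (R {a | t < g a}).toReal ∈ Icc (0:ℝ) 1 := by
    intro R _ t
    refine ⟨ENNReal.toReal_nonneg, ?_⟩
    exact ENNReal.toReal_le_of_le_ofReal one_pos.le (by simpa using prob_le_one)
  have intF : ∀ (R : Measure Ω) [IsProbabilityMeasure R],
      IntegrableOn (fun t => (R {a | t < g a}).toReal) (Ioi (0:ℝ)) := by
    intro R _
    have hsplit : Ioi (0:ℝ) = Ioc 0 M ∪ Ioi M := (Set.Ioc_union_Ioi_eq_Ioi hM).symm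
    rw [hsplit]
    apply IntegrableOn.union
    · have hconst : IntegrableOn (fun _ : ℝ => (1:ℝ)) (Ioc 0 M) := by
        exact integrableOn_const (by rw [Real.volume_Ioc]; exact ENNReal.ofReal_ne_top)
      refine hconst.mono' ((anti R).measurable.aestronglyMeasurable) ?_
      exact Filter.Eventually.of_forall fun t => by
        simpa [Real.norm_eq_abs, abs_of_nonneg (bddP R t).1] using (bddP R t).2
    · have heq : EqOn (fun t => (R {a | t < g a}).toReal) (fun _ => (0:ℝ)) (Ioi M) :=
        fun t ht => zeroP R t (le_of_lt ht)
      exact (integrableOn_congr_fun heq measurableSet_Ioi).2 (integrableOn_zero)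
  have intFp : IntegrableOn (fun t => (P {a | t < g a}).toReal) (Ioi (0:ℝ)) := intF P
  have intFq : IntegrableOn (fun t => (Q {a | t < g a}).toReal) (Ioi (0:ℝ)) := intF Q
  rw [eqP, eqQ, ← integral_sub intFp intFq]
  calc |∫ t in Ioi (0:ℝ), ((P {a | t < g a}).toReal - (Q {a | t < g a}).toReal)|
      ≤ ∫ t in Ioi (0:ℝ), |(P {a | t < g a}).toReal - (Q {a | t < g a}).toReal| := by
        simpa [Real.norm_eq_abs] using
          norm_integral_le_integral_norm (μ := volume.restrict (Ioi (0:ℝ)))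
            (fun t => (P {a | t < g a}).toReal - (Q {a | t < g a}).toReal)
    _ ≤ ∫ t in Ioi (0:ℝ), (Ioc (0:ℝ) M).indicator (fun _ => φ) t := by
        apply setIntegral_mono_on ((intFp.sub intFq).abs)
        · refine ((integrable_indicator_iff measurableSet_Ioc).2 ?_).integrableOn
          exact integrableOn_const (by rw [Real.volume_Ioc]; exact ENNReal.ofReal_ne_top)
        · exact measurableSet_Ioi
        · intro t ht
          simp only [Pi.sub_apply]
          by_cases hle : t ≤ M
          · rw [Set.indicator_of_mem (Set.mem_Ioc.mpr ⟨ht, hle⟩)]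
            exact h t ht
          · rw [Set.indicator_of_notMem (fun hmem => hle hmem.2)]
            rw [zeroP P t (le_of_not_ge hle), zeroP Q t (le_of_not_ge hle)]
            simp
    _ = φ * M := by
        rw [setIntegral_indicator measurableSet_Ioc]
        have hi : Ioi (0:ℝ) ∩ Ioc 0 M = Ioc 0 M := by
          ext t
          simp only [mem_inter_iff, mem_Ioc, mem_Ioi, and_iff_right_iff_imp]
          exact fun ht => ht.1
        rw [hi, setIntegral_const, Real.volume_real_Ioc_of_le hM, smul_eq_mul]
        ring

open scoped ProbabilityTheory in
private lemma key_lemma {Ω : Type*} [F : MeasurableSpace Ω] (μ : Measure Ω) [IsProbabilityMeasure μ]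
    (ℬ : MeasurableSpace Ω) (hℬ : ℬ ≤ F) (φ CY : ℝ) (hφ : 0 ≤ φ) (hCY : 0 ≤ CY)
    (Y : Ω → ℝ) (hY : Measurable[ℬ] Y) (hYb : ∀ ω, |Y ω| ≤ CY)
    (A : Set Ω) (hA : MeasurableSet[F] A) (hApos : 0 < μ A)
    (hmixA : ∀ B : Set Ω, MeasurableSet[ℬ] B →
      |(μ B).toReal - (μ (A ∩ B)).toReal / (μ A).toReal| ≤ φ) :
    |(∫ ω in A, Y ω ∂μ) - (μ A).toReal * ∫ ω, Y ω ∂μ| ≤ 2 * φ * CY * (μ A).toReal := by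
  set Q := μ[|A] with hQ
  haveI : IsProbabilityMeasure Q := ProbabilityTheory.cond_isProbabilityMeasure hApos.ne'
  have hYF : Measurable[F] Y := hY.mono hℬ le_rfl
  have hcond : ∀ t : ℝ, 0 < t →
      |(μ {ω | t < Y ω + CY}).toReal - (Q {ω | t < Y ω + CY}).toReal| ≤ φ := by
    intro t _
    have hBm : MeasurableSet[ℬ] {ω | t < Y ω + CY} := by
      have hs : {ω | t < Y ω + CY} = Y ⁻¹' (Set.Ioi (t - CY)) := by
        ext ω
        simp only [Set.mem_setOf_eq, Set.mem_preimage, Set.mem_Ioi]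
        constructor <;> intro <;> linarith
      rw [hs]; exact hY measurableSet_Ioi
    have hm := hmixA _ hBm
    have hQB : (Q {ω | t < Y ω + CY}).toReal
        = (μ (A ∩ {ω | t < Y ω + CY})).toReal / (μ A).toReal := by
      have hc := ProbabilityTheory.cond_apply hA μ {ω | t < Y ω + CY}
      rw [hQ, hc, ENNReal.toReal_mul, ENNReal.toReal_inv]
      ring
    rw [hQB]; exact hm
  have tv := @tv_aux Ω F μ Q inferInstance inferInstance (fun ω => Y ω + CY) (hYF.add_const CY) (2*CY) φ hφ (by linarith)
    (fun ω => by have := (abs_le.1 (hYb ω)).1; show (0:ℝ) ≤ Y ω + CY; linarith)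
    (fun ω => by have := (abs_le.1 (hYb ω)).2; show Y ω + CY ≤ 2*CY; linarith) hcond
  have intYμ : Integrable Y μ := @integrable_of_bdd Ω F μ inferInstance Y hYF CY hYb
  have intYQ : Integrable Y Q := @integrable_of_bdd Ω F Q inferInstance Y hYF CY hYb
  have e1 : (∫ ω, (Y ω + CY) ∂μ) = (∫ ω, Y ω ∂μ) + CY := by
    rw [integral_add intYμ (integrable_const CY), integral_const]; simp
  have e2 : (∫ ω, (Y ω + CY) ∂Q) = (∫ ω, Y ω ∂Q) + CY := by
    rw [integral_add intYQ (integrable_const CY), integral_const]; simp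
  simp only [e1, e2] at tv
  have tv' : |(∫ ω, Y ω ∂Q) - ∫ ω, Y ω ∂μ| ≤ 2 * φ * CY := by
    have h1 : ((∫ ω, Y ω ∂μ) + CY) - ((∫ ω, Y ω ∂Q) + CY) = (∫ ω, Y ω ∂μ) - ∫ ω, Y ω ∂Q := by
      ring
    rw [h1, abs_sub_comm] at tv
    linarith
  have hμA_ne_top : μ A ≠ ⊤ := measure_ne_top μ A
  have htR : 0 < (μ A).toReal := ENNReal.toReal_pos hApos.ne' hμA_ne_top
  have hQdef : Q = (μ A)⁻¹ • μ.restrict A := rfl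
  have eQ : (∫ ω, Y ω ∂Q) = ((μ A).toReal)⁻¹ * ∫ ω in A, Y ω ∂μ := by
    rw [hQdef, integral_smul_measure, ENNReal.toReal_inv, smul_eq_mul]
  have eA : (∫ ω in A, Y ω ∂μ) = (μ A).toReal * ∫ ω, Y ω ∂Q := by
    rw [eQ]; field_simp
  rw [eA]
  have hfac : (μ A).toReal * (∫ ω, Y ω ∂Q) - (μ A).toReal * ∫ ω, Y ω ∂μ
      = (μ A).toReal * ((∫ ω, Y ω ∂Q) - ∫ ω, Y ω ∂μ) := by ring
  rw [hfac, abs_mul, abs_of_nonneg htR.le]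
  calc (μ A).toReal * |(∫ ω, Y ω ∂Q) - ∫ ω, Y ω ∂μ| ≤ (μ A).toReal * (2 * φ * CY) :=
        mul_le_mul_of_nonneg_left tv' htR.le
    _ = 2 * φ * CY * (μ A).toReal := by ring

private lemma main_aux {Ω : Type*} (𝒜 ℬ : MeasurableSpace Ω) [F : MeasurableSpace Ω]
    (μ : Measure Ω) [IsProbabilityMeasure μ] (h𝒜 : 𝒜 ≤ F) (hℬ : ℬ ≤ F)
    (φ : ℝ) (hφ : 0 ≤ φ)
    (hmix : ∀ A B : Set Ω, MeasurableSet[𝒜] A → MeasurableSet[ℬ] B → 0 < μ A →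
      |(μ B).toReal - (μ (A ∩ B)).toReal / (μ A).toReal| ≤ φ)
    (X Y : Ω → ℝ) (hX : Measurable[𝒜] X) (hY : Measurable[ℬ] Y)
    (CX CY : ℝ) (hCX : 0 ≤ CX) (hCY : 0 ≤ CY)
    (hXb : ∀ ω, |X ω| ≤ CX) (hYb : ∀ ω, |Y ω| ≤ CY) :
    |(∫ ω, X ω * Y ω ∂μ) - (∫ ω, X ω ∂μ) * ∫ ω, Y ω ∂μ| ≤ 2 * φ * CX * CY := by
  haveI : IsFiniteMeasure (μ.trim h𝒜) := isFiniteMeasure_trim h𝒜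
  haveI : SigmaFinite (μ.trim h𝒜) := inferInstance
  have hXF : Measurable[F] X := hX.mono h𝒜 le_rfl
  have hYF : Measurable[F] Y := hY.mono hℬ le_rfl
  have intY : Integrable Y μ := @integrable_of_bdd Ω F μ inferInstance Y hYF CY hYb
  have intX : Integrable X μ := @integrable_of_bdd Ω F μ inferInstance X hXF CX hXb
  have intXY : Integrable (fun ω => X ω * Y ω) μ :=
    @integrable_of_bdd Ω F μ inferInstance _ (hXF.mul hYF) (CX * CY)
      (fun ω => by rw [abs_mul]; exact mul_le_mul (hXb ω) (hYb ω) (abs_nonneg _) hCX)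
  set Z : Ω → ℝ := μ[Y|𝒜] with hZ
  have hZsm : StronglyMeasurable[𝒜] Z := stronglyMeasurable_condExp
  have intZ : Integrable Z μ := integrable_condExp
  set I : ℝ := ∫ ω, Y ω ∂μ with hI
  have hmul : μ[(fun ω => X ω * Y ω)|𝒜] =ᵐ[μ] fun ω => X ω * Z ω :=
    condExp_mul_of_stronglyMeasurable_left hX.stronglyMeasurable intXY intY
  have step1 : (∫ ω, X ω * Y ω ∂μ) = ∫ ω, X ω * Z ω ∂μ := by
    rw [← integral_condExp h𝒜 (f := fun ω => X ω * Y ω)]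
    exact integral_congr_ae hmul
  have keybound : ∀ A : Set Ω, MeasurableSet[𝒜] A →
      |(∫ ω in A, Y ω ∂μ) - (μ A).toReal * I| ≤ 2 * φ * CY * (μ A).toReal := by
    intro A hA𝒜
    rcases eq_zero_or_pos (μ A) with h0 | hpos
    · have hr : μ.restrict A = 0 := Measure.restrict_eq_zero.mpr h0
      simp [hr, h0]
    · exact @key_lemma Ω F μ inferInstance ℬ hℬ φ CY hφ hCY Y hY hYb A (h𝒜 A hA𝒜) hpos
        (fun B hB => hmix A B hA𝒜 hB hpos)
  set A : Set Ω := {ω | I ≤ Z ω} with hAdef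
  have hA𝒜 : MeasurableSet[𝒜] A := hZsm.measurable measurableSet_Ici
  have hAF : MeasurableSet[F] A := h𝒜 A hA𝒜
  have hAc𝒜 : MeasurableSet[𝒜] Aᶜ := hA𝒜.compl
  have hZA : ∀ B : Set Ω, MeasurableSet[𝒜] B → (∫ ω in B, Z ω ∂μ) = ∫ ω in B, Y ω ∂μ :=
    fun B hB => setIntegral_condExp h𝒜 intY hB
  have intZI : Integrable (fun ω => Z ω - I) μ := intZ.sub (integrable_const I)
  have eqsplit : ∀ B : Set Ω, MeasurableSet[𝒜] B →
      (∫ ω in B, (Z ω - I) ∂μ) = (∫ ω in B, Y ω ∂μ) - (μ B).toReal * I := by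
    intro B hB
    rw [integral_sub (intZ.integrableOn) (integrableOn_const (measure_ne_top μ B)),
      hZA B hB, setIntegral_const, smul_eq_mul, measureReal_def]
  have habs : (∫ ω, |Z ω - I| ∂μ) ≤ 2 * φ * CY := by
    have hsplit : (∫ ω, |Z ω - I| ∂μ)
        = (∫ ω in A, |Z ω - I| ∂μ) + ∫ ω in Aᶜ, |Z ω - I| ∂μ :=
      (integral_add_compl hAF intZI.abs).symm
    have e1 : (∫ ω in A, |Z ω - I| ∂μ) = ∫ ω in A, (Z ω - I) ∂μ :=
      setIntegral_congr_fun hAF (fun ω hω => abs_of_nonneg (sub_nonneg.2 hω))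
    have e2 : (∫ ω in Aᶜ, |Z ω - I| ∂μ) = -∫ ω in Aᶜ, (Z ω - I) ∂μ := by
      rw [← integral_neg]
      refine setIntegral_congr_fun hAF.compl (fun ω hω => ?_)
      have hlt : Z ω < I := lt_of_not_ge hω
      rw [abs_of_neg (by linarith)]
    have k1 := keybound A hA𝒜
    have k2 := keybound Aᶜ hAc𝒜
    have sum1 : (μ A).toReal + (μ Aᶜ).toReal = 1 := by
      rw [← ENNReal.toReal_add (measure_ne_top μ A) (measure_ne_top μ Aᶜ),
        measure_add_measure_compl hAF]
      simp
    have hsum : 2 * φ * CY * (μ A).toReal + 2 * φ * CY * (μ Aᶜ).toReal = 2 * φ * CY := by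
      rw [← mul_add, sum1, mul_one]
    rw [hsplit, e1, e2, eqsplit A hA𝒜, eqsplit Aᶜ hAc𝒜]
    have b1 : (∫ ω in A, Y ω ∂μ) - (μ A).toReal * I ≤ 2 * φ * CY * (μ A).toReal :=
      (abs_le.1 k1).2
    have b2 : -((∫ ω in Aᶜ, Y ω ∂μ) - (μ Aᶜ).toReal * I) ≤ 2 * φ * CY * (μ Aᶜ).toReal := by
      have := (abs_le.1 k2).1; linarith
    linarith
  have intXZI : Integrable (fun ω => X ω * (Z ω - I)) μ :=
    intZI.bdd_mul hXF.aestronglyMeasurable (Filter.Eventually.of_forall fun ω => by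
      rw [Real.norm_eq_abs]; exact hXb ω)
  have intXI : Integrable (fun ω => X ω * I) μ := intX.mul_const I
  have intXZ : Integrable (fun ω => X ω * Z ω) μ :=
    intZ.bdd_mul hXF.aestronglyMeasurable (Filter.Eventually.of_forall fun ω => by
      rw [Real.norm_eq_abs]; exact hXb ω)
  have hXI : (∫ ω, X ω * I ∂μ) = (∫ ω, X ω ∂μ) * I := integral_mul_const I X
  have hdiff : (∫ ω, X ω * Z ω ∂μ) - (∫ ω, X ω ∂μ) * I = ∫ ω, X ω * (Z ω - I) ∂μ := by
    rw [← hXI, ← integral_sub intXZ intXI]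
    congr 1
    ext ω
    ring
  rw [step1, hdiff]
  have intabs : Integrable (fun ω => |X ω| * |Z ω - I|) μ :=
    intXZI.abs.congr (Filter.Eventually.of_forall fun ω => abs_mul (X ω) (Z ω - I))
  calc |∫ ω, X ω * (Z ω - I) ∂μ| ≤ ∫ ω, |X ω| * |Z ω - I| ∂μ := by
        simpa [Real.norm_eq_abs, abs_mul] using
          norm_integral_le_integral_norm (μ := μ) (fun ω => X ω * (Z ω - I))
    _ ≤ ∫ ω, CX * |Z ω - I| ∂μ := by
        refine integral_mono intabs (intZI.abs.const_mul CX) (fun ω => ?_)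
        exact mul_le_mul_of_nonneg_right (hXb ω) (abs_nonneg _)
    _ = CX * ∫ ω, |Z ω - I| ∂μ := integral_const_mul CX _
    _ ≤ CX * (2 * φ * CY) := mul_le_mul_of_nonneg_left habs hCX
    _ = 2 * φ * CX * CY := by ring


end Aux

/-- Covariance inequality for uniformly mixing σ-algebras: if
`|P(B) - P(B|A)| ≤ φ` for all `A ∈ 𝒜` with `P(A) > 0` and all `B ∈ ℬ`, then for bounded
`𝒜`-measurable `X` and bounded `ℬ`-measurable `Y`,
`|E[XY] - E[X]E[Y]| ≤ 2φ ‖X‖_∞ ‖Y‖_∞`. -/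
theorem mixing_covariance_inequality {Ω : Type*} [F : MeasurableSpace Ω]
    (μ : Measure Ω) [IsProbabilityMeasure μ]
    (𝒜 ℬ : MeasurableSpace Ω) (h𝒜 : 𝒜 ≤ F) (hℬ : ℬ ≤ F)
    (φ : ℝ) (hφ : 0 ≤ φ)
    (hmix : ∀ A B : Set Ω, MeasurableSet[𝒜] A → MeasurableSet[ℬ] B → 0 < μ A →
      |(μ B).toReal - (μ (A ∩ B)).toReal / (μ A).toReal| ≤ φ)
    (X Y : Ω → ℝ) (hX : Measurable[𝒜] X) (hY : Measurable[ℬ] Y)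
    (CX CY : ℝ) (hCX : 0 ≤ CX) (hCY : 0 ≤ CY)
    (hXb : ∀ ω, |X ω| ≤ CX) (hYb : ∀ ω, |Y ω| ≤ CY) :
    |(∫ ω, X ω * Y ω ∂μ) - (∫ ω, X ω ∂μ) * ∫ ω, Y ω ∂μ| ≤ 2 * φ * CX * CY :=
  main_aux (F := F) 𝒜 ℬ μ h𝒜 hℬ φ hφ hmix X Y hX hY CX CY hCX hCY hXb hYb
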